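/- Suppose 𝔰 has a canonical basis X_2, …, X_d and that YX − XY ∈ 𝔰 holds for all X ∈ 𝔰. Then for all ξ, ξ' ∈ ℝ^d with ξ_1 ≠ 0 and ξ'_1 ≠ 0 there exists exactly one h ∈ H with h^T ξ = ξ'; moreover (h^T ξ)_1 ≠ 0 for every h ∈ H and every ξ with ξ_1 ≠ 0. In particular, the dual action of H admits the single open orbit O = {ξ ∈ ℝ^d : ξ_1 ≠ 0} = {h^T e_1 : h ∈ H}, on which H acts freely. -/

import Mathlib

open Matrix

/-- The shearlet dilation group
`H = {ε·exp(rY)·(I_d + X) : ε ∈ {±1}, r ∈ ℝ, X ∈ 𝔰}`, where `Y = diag(1, λ_2, …, λ_d)`. -/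
def shearletGroupSet (d : ℕ) (lam : Fin d → ℝ)
    (𝔰 : Submodule ℝ (Matrix (Fin d) (Fin d) ℝ)) : Set (Matrix (Fin d) (Fin d) ℝ) :=
  {h | ∃ ε r : ℝ, ∃ Z ∈ 𝔰, (ε = 1 ∨ ε = -1) ∧
    h = ε • (NormedSpace.exp (r • Matrix.diagonal lam) * (1 + Z))}

section Aux

variable {d : ℕ} [NeZero d] {𝔰 : Submodule ℝ (Matrix (Fin d) (Fin d) ℝ)}
  {X : Fin d → Matrix (Fin d) (Fin d) ℝ}

/-- Matrix exponential of a scaled diagonal matrix. -/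
lemma shear_exp_diag (r : ℝ) (lam : Fin d → ℝ) :
    NormedSpace.exp (r • Matrix.diagonal lam)
      = Matrix.diagonal (fun i => Real.exp (r * lam i)) := by
  rw [Matrix.diagonal_smul r lam |>.symm] -- may need adjusting
  rw [Matrix.exp_diagonal]
  have h : NormedSpace.exp (r • lam) = fun i => Real.exp (r * lam i) := by
    funext i
    rw [Pi.coe_exp, Pi.smul_apply, smul_eq_mul, ← Real.exp_eq_exp_ℝ]
  rw [h]

/-- First row of a canonical combination. -/
lemma shear_combo_row
    (hXrow : ∀ i : Fin d, i ≠ 0 → ∀ k : Fin d, X i 0 k = if k = i then 1 else 0)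
    (c : Fin d → ℝ) (k : Fin d) :
    (∑ i ∈ Finset.univ.erase (0 : Fin d), c i • X i) 0 k
      = if k = 0 then 0 else c k := by
  rw [Matrix.sum_apply]
  have h1 : ∀ i ∈ Finset.univ.erase (0 : Fin d),
      (c i • X i) 0 k = if k = i then c i else 0 := by
    intro i hi
    rw [Matrix.smul_apply, hXrow i (Finset.mem_erase.mp hi).1 k, smul_eq_mul]
    split <;> simp
  rw [Finset.sum_congr rfl h1, Finset.sum_ite_eq (Finset.univ.erase (0 : Fin d)) k c]
  by_cases hk : k = 0 <;> simp [hk]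

/-- An element of `𝔰` with zero first row is zero. -/
lemma shear_row_zero
    (hXrow : ∀ i : Fin d, i ≠ 0 → ∀ k : Fin d, X i 0 k = if k = i then 1 else 0)
    (hXspan : ∀ Z ∈ 𝔰, ∃ c : Fin d → ℝ, Z = ∑ i ∈ Finset.univ.erase 0, c i • X i)
    {Z : Matrix (Fin d) (Fin d) ℝ} (hZ : Z ∈ 𝔰) (h0 : ∀ j, Z 0 j = 0) : Z = 0 := by
  obtain ⟨c, hc⟩ := hXspan Z hZ
  rw [hc]
  apply Finset.sum_eq_zero
  intro i hi
  have hi0 : i ≠ 0 := (Finset.mem_erase.mp hi).1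
  have := h0 i
  rw [hc, shear_combo_row hXrow c i, if_neg hi0] at this
  rw [this, zero_smul]

/-- Column 0 of any `Z ∈ 𝔰` is zero, hence `(Zᵀ η)_0 = 0`. -/
lemma shear_col0
    (hupper : ∀ X ∈ 𝔰, ∀ j k : Fin d, k ≤ j → X j k = 0)
    {Z : Matrix (Fin d) (Fin d) ℝ} (hZ : Z ∈ 𝔰) (w : Fin d → ℝ) :
    (Zᵀ.mulVec w) 0 = 0 := by
  unfold Matrix.mulVec dotProduct
  apply Finset.sum_eq_zero
  intro k _
  show Zᵀ 0 k * w k = 0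
  rw [Matrix.transpose_apply, hupper Z hZ k 0 (Fin.zero_le k), zero_mul]

/-- Key injectivity: if `η 0 ≠ 0` and `Zᵀ η = 0` for `Z ∈ 𝔰`, then `Z = 0`. -/
lemma shear_inj
    (hupper : ∀ X ∈ 𝔰, ∀ j k : Fin d, k ≤ j → X j k = 0)
    (hmulclosed : ∀ X ∈ 𝔰, ∀ Y ∈ 𝔰, X * Y ∈ 𝔰)
    (hXmem : ∀ i : Fin d, i ≠ 0 → X i ∈ 𝔰)
    (hXrow : ∀ i : Fin d, i ≠ 0 → ∀ k : Fin d, X i 0 k = if k = i then 1 else 0)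
    (hXspan : ∀ Z ∈ 𝔰, ∃ c : Fin d → ℝ, Z = ∑ i ∈ Finset.univ.erase 0, c i • X i)
    {Z : Matrix (Fin d) (Fin d) ℝ} (hZ : Z ∈ 𝔰) {η : Fin d → ℝ} (hη : η 0 ≠ 0)
    (hker : Zᵀ.mulVec η = 0) : Z = 0 := by
  set A : Matrix (Fin d) (Fin d) ℝ := ∑ i ∈ Finset.univ.erase (0 : Fin d), η i • X i with hA
  have hAmem : A ∈ 𝔰 :=
    Submodule.sum_mem _ fun i hi =>
      Submodule.smul_mem _ _ (hXmem i (Finset.mem_erase.mp hi).1)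
  set M : Matrix (Fin d) (Fin d) ℝ := η 0 • 1 + A with hM
  -- first row of M is η
  have hMrow : ∀ k, M 0 k = η k := by
    intro k
    have hA0 : A 0 k = if k = 0 then 0 else η k := shear_combo_row hXrow η k
    rw [hM, Matrix.add_apply, Matrix.smul_apply, Matrix.one_apply, hA0]
    by_cases hk : k = 0 <;> simp [hk, eq_comm]
  -- M * Z has zero first row
  have hMZrow : ∀ j, (M * Z) 0 j = 0 := by
    intro j
    rw [Matrix.mul_apply]
    have : ∀ k, M 0 k * Z k j = Zᵀ j k * η k := by
      intro k
      rw [hMrow k, Matrix.transpose_apply, mul_comm]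
    calc ∑ k, M 0 k * Z k j = ∑ k, Zᵀ j k * η k := Finset.sum_congr rfl fun k _ => this k
      _ = (Zᵀ.mulVec η) j := rfl
      _ = 0 := by rw [hker]; rfl
  -- M * Z ∈ 𝔰
  have hMZmem : M * Z ∈ 𝔰 := by
    have : M * Z = η 0 • Z + A * Z := by
      rw [hM, add_mul, smul_mul_assoc, one_mul]
    rw [this]
    exact Submodule.add_mem _ (Submodule.smul_mem _ _ hZ) (hmulclosed A hAmem Z hZ)
  have hMZ : M * Z = 0 := shear_row_zero hXrow hXspan hMZmem hMZrow
  -- M is invertible : upper triangular with diagonal η 0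
  have htri : M.BlockTriangular id := by
    intro i j hij
    have hji : (j : Fin d) ≠ i := ne_of_lt hij
    have h1 : (1 : Matrix (Fin d) (Fin d) ℝ) i j = 0 := by
      rw [Matrix.one_apply, if_neg (fun h : i = j => hji h.symm)]
    rw [hM, Matrix.add_apply, Matrix.smul_apply, h1,
      hupper A hAmem i j (le_of_lt hij), smul_zero, add_zero]
  have hdet : M.det = η 0 ^ d := by
    rw [Matrix.det_of_upperTriangular htri]
    have : ∀ i : Fin d, M i i = η 0 := by
      intro i
      rw [hM, Matrix.add_apply, Matrix.smul_apply, Matrix.one_apply_eq,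
        hupper A hAmem i i (le_refl i), smul_eq_mul, mul_one, add_zero]
    rw [Finset.prod_congr rfl fun i _ => this i, Finset.prod_const,
      Finset.card_univ, Fintype.card_fin]
  have hunit : IsUnit M.det := by
    rw [hdet]
    exact (pow_ne_zero d hη).isUnit
  calc Z = 1 * Z := (one_mul Z).symm
    _ = (M⁻¹ * M) * Z := by rw [Matrix.nonsing_inv_mul M hunit]
    _ = M⁻¹ * (M * Z) := by rw [mul_assoc]
    _ = 0 := by rw [hMZ, mul_zero]

/-- Key surjectivity: if `η 0 ≠ 0` and `v 0 = 0` there is `Z ∈ 𝔰` with `Zᵀ η = v`. -/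
lemma shear_surj
    (hupper : ∀ X ∈ 𝔰, ∀ j k : Fin d, k ≤ j → X j k = 0)
    (hmulclosed : ∀ X ∈ 𝔰, ∀ Y ∈ 𝔰, X * Y ∈ 𝔰)
    (hXmem : ∀ i : Fin d, i ≠ 0 → X i ∈ 𝔰)
    (hXrow : ∀ i : Fin d, i ≠ 0 → ∀ k : Fin d, X i 0 k = if k = i then 1 else 0)
    (hXspan : ∀ Z ∈ 𝔰, ∃ c : Fin d → ℝ, Z = ∑ i ∈ Finset.univ.erase 0, c i • X i)
    (hXindep : LinearIndependent ℝ (fun i : {i : Fin d // i ≠ 0} => X i.1))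
    {η : Fin d → ℝ} (hη : η 0 ≠ 0) (v : Fin d → ℝ) (hv : v 0 = 0) :
    ∃ Z ∈ 𝔰, Zᵀ.mulVec η = v := by
  classical
  -- basis of 𝔰
  have hindep : LinearIndependent ℝ
      (fun i : {i : Fin d // i ≠ 0} => (⟨X i.1, hXmem i.1 i.2⟩ : 𝔰)) :=
    hXindep.of_comp 𝔰.subtype
  have hspan : ⊤ ≤ Submodule.span ℝ
      (Set.range (fun i : {i : Fin d // i ≠ 0} => (⟨X i.1, hXmem i.1 i.2⟩ : 𝔰))) := by
    rintro z -
    obtain ⟨c, hc⟩ := hXspan z.1 z.2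
    have hz : z = ∑ i : {i : Fin d // i ≠ 0}, c i.1 • (⟨X i.1, hXmem i.1 i.2⟩ : 𝔰) := by
      apply Subtype.ext
      push_cast
      rw [hc]
      rw [Finset.sum_subtype (p := fun i : Fin d => i ≠ 0) (Finset.univ.erase 0)
        (by intro x; simp) (fun i => c i • X i)]
    rw [hz]
    exact Submodule.sum_mem _ fun i _ =>
      Submodule.smul_mem _ _ (Submodule.subset_span ⟨i, rfl⟩)
  let b : Module.Basis {i : Fin d // i ≠ 0} ℝ 𝔰 := Module.Basis.mk hindep hspan
  -- the linear map
  let f : 𝔰 →ₗ[ℝ] ({j : Fin d // j ≠ 0} → ℝ) :=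
    { toFun := fun Z => fun j => ((Z : Matrix (Fin d) (Fin d) ℝ)ᵀ.mulVec η) j.1
      map_add' := by
        intro Z W
        funext j
        simp [Matrix.transpose_add, Matrix.add_mulVec]
      map_smul' := by
        intro a Z
        funext j
        simp [Matrix.transpose_smul, Matrix.smul_mulVec] }
  have hfinj : Function.Injective f := by
    rw [injective_iff_map_eq_zero']
    intro Z
    constructor
    · intro hfZ
      have hkerZ : (Z : Matrix (Fin d) (Fin d) ℝ)ᵀ.mulVec η = 0 := by
        funext j
        by_cases hj : j = 0
        · rw [hj]
          exact shear_col0 hupper Z.2 η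
        · exact congrFun hfZ ⟨j, hj⟩
      exact Subtype.ext (shear_inj hupper hmulclosed hXmem hXrow hXspan Z.2 hη hkerZ)
    · intro h; rw [h, map_zero]
  have hrank : Module.finrank ℝ 𝔰 = Module.finrank ℝ ({j : Fin d // j ≠ 0} → ℝ) := by
    rw [Module.finrank_eq_card_basis b, Module.finrank_fintype_fun_eq_card]
  have hfsurj : Function.Surjective f :=
    (LinearMap.injective_iff_surjective_of_finrank_eq_finrank hrank).mp hfinj
  obtain ⟨Z, hfZ⟩ := hfsurj (fun j => v j.1)
  refine ⟨Z.1, Z.2, funext fun j => ?_⟩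
  by_cases hj : j = 0
  · rw [hj, shear_col0 hupper Z.2 η, hv]
  · exact congrFun hfZ ⟨j, hj⟩

/-- The full dual action formula. -/
lemma shear_mulVec_formula
    (hupper : ∀ X ∈ 𝔰, ∀ j k : Fin d, k ≤ j → X j k = 0)
    (lam : Fin d → ℝ) {Z : Matrix (Fin d) (Fin d) ℝ} (hZ : Z ∈ 𝔰)
    (ε r : ℝ) (ξ : Fin d → ℝ) :
    ((ε • (NormedSpace.exp (r • Matrix.diagonal lam) * (1 + Z)))ᵀ).mulVec ξ
      = ε • ((fun i => Real.exp (r * lam i) * ξ i)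
          + Zᵀ.mulVec (fun i => Real.exp (r * lam i) * ξ i)) := by
  set η : Fin d → ℝ := fun i => Real.exp (r * lam i) * ξ i with hηdef
  rw [shear_exp_diag r lam, Matrix.transpose_smul, Matrix.transpose_mul,
    Matrix.diagonal_transpose, Matrix.smul_mulVec, ← Matrix.mulVec_mulVec]
  congr 1
  have hdiag : (Matrix.diagonal (fun i => Real.exp (r * lam i))).mulVec ξ = η := by
    funext i
    rw [Matrix.mulVec_diagonal]
  rw [hdiag, Matrix.transpose_add, Matrix.transpose_one, Matrix.add_mulVec,
    Matrix.one_mulVec]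

end Aux

/-- For all `ξ, ξ'` with nonzero first coordinate there is exactly one
`h ∈ H` with `hᵀ ξ = ξ'`; moreover `(hᵀ ξ)_1 ≠ 0` whenever `ξ_1 ≠ 0`.  In particular the
dual action of `H` has the single open orbit `O = {ξ : ξ_1 ≠ 0} = {hᵀ e_1 : h ∈ H}`,
on which `H` acts freely. -/
theorem statement4 (d : ℕ) [NeZero d] (hd : 2 ≤ d)
    (𝔰 : Submodule ℝ (Matrix (Fin d) (Fin d) ℝ))
    (hupper : ∀ X ∈ 𝔰, ∀ j k : Fin d, k ≤ j → X j k = 0)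
    (hmulclosed : ∀ X ∈ 𝔰, ∀ Y ∈ 𝔰, X * Y ∈ 𝔰)
    (X : Fin d → Matrix (Fin d) (Fin d) ℝ)
    (hXmem : ∀ i : Fin d, i ≠ 0 → X i ∈ 𝔰)
    (hXrow : ∀ i : Fin d, i ≠ 0 → ∀ k : Fin d, X i 0 k = if k = i then 1 else 0)
    (hXspan : ∀ Z ∈ 𝔰, ∃ c : Fin d → ℝ, Z = ∑ i ∈ Finset.univ.erase 0, c i • X i)
    (hXindep : LinearIndependent ℝ (fun i : {i : Fin d // i ≠ 0} => X i.1))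
    (lam : Fin d → ℝ) (hlam0 : lam 0 = 1)
    (hcomm : ∀ Z ∈ 𝔰, Matrix.diagonal lam * Z - Z * Matrix.diagonal lam ∈ 𝔰) :
    (∀ ξ ξ' : Fin d → ℝ, ξ 0 ≠ 0 → ξ' 0 ≠ 0 →
      ∃! h : Matrix (Fin d) (Fin d) ℝ, h ∈ shearletGroupSet d lam 𝔰 ∧ hᵀ.mulVec ξ = ξ') ∧
    (∀ h ∈ shearletGroupSet d lam 𝔰, ∀ ξ : Fin d → ℝ, ξ 0 ≠ 0 → (hᵀ.mulVec ξ) 0 ≠ 0) ∧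
    ({ξ : Fin d → ℝ | ξ 0 ≠ 0} =
      {ξ : Fin d → ℝ | ∃ h ∈ shearletGroupSet d lam 𝔰, ξ = hᵀ.mulVec (Pi.single 0 1)}) := by
  -- first coordinate formula
  have hcoord : ∀ (ε r : ℝ) (Z : Matrix (Fin d) (Fin d) ℝ), Z ∈ 𝔰 → ∀ ξ : Fin d → ℝ,
      (((ε • (NormedSpace.exp (r • Matrix.diagonal lam) * (1 + Z)))ᵀ).mulVec ξ) 0
        = ε * (Real.exp r * ξ 0) := by
    intro ε r Z hZ ξ
    rw [shear_mulVec_formula hupper lam hZ ε r ξ]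
    have h0 : (Zᵀ.mulVec (fun i => Real.exp (r * lam i) * ξ i)) 0 = 0 :=
      shear_col0 hupper hZ _
    simp only [Pi.smul_apply, Pi.add_apply, h0, add_zero, smul_eq_mul, hlam0, mul_one]
  -- second bullet
  have H2 : ∀ h ∈ shearletGroupSet d lam 𝔰, ∀ ξ : Fin d → ℝ, ξ 0 ≠ 0 →
      (hᵀ.mulVec ξ) 0 ≠ 0 := by
    rintro h ⟨ε, r, Z, hZ, hε, rfl⟩ ξ hξ
    rw [hcoord ε r Z hZ ξ]
    have hεne : ε ≠ 0 := by rcases hε with h | h <;> rw [h] <;> norm_num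
    exact mul_ne_zero hεne (mul_ne_zero (Real.exp_ne_zero r) hξ)
  -- first bullet
  have H1 : ∀ ξ ξ' : Fin d → ℝ, ξ 0 ≠ 0 → ξ' 0 ≠ 0 →
      ∃! h : Matrix (Fin d) (Fin d) ℝ,
        h ∈ shearletGroupSet d lam 𝔰 ∧ hᵀ.mulVec ξ = ξ' := by
    intro ξ ξ' hξ hξ'
    set t : ℝ := ξ' 0 / ξ 0 with ht_def
    have ht : t ≠ 0 := div_ne_zero hξ' hξ
    set ε : ℝ := if 0 < t then 1 else -1 with hε_def
    set r : ℝ := Real.log |t| with hr_def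
    have hεr : ε * Real.exp r = t := by
      rw [hr_def, Real.exp_log (abs_pos.mpr ht)]
      by_cases h : 0 < t
      · rw [hε_def, if_pos h, one_mul, abs_of_pos h]
      · have hneg : t < 0 := lt_of_le_of_ne (not_lt.mp h) ht
        rw [hε_def, if_neg h, abs_of_neg hneg]; ring
    have hεpm : ε = 1 ∨ ε = -1 := by
      by_cases h : 0 < t
      · left; rw [hε_def, if_pos h]
      · right; rw [hε_def, if_neg h]
    have hεsq : ε * ε = 1 := by rcases hεpm with h | h <;> rw [h] <;> norm_num
    have hεne : ε ≠ 0 := by rcases hεpm with h | h <;> rw [h] <;> norm_num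
    have hξ'0 : ξ' 0 = ε * Real.exp r * ξ 0 := by
      rw [hεr, ht_def, div_mul_cancel₀ _ hξ]
    set η : Fin d → ℝ := fun i => Real.exp (r * lam i) * ξ i with hη_def
    have hη0 : η 0 = Real.exp r * ξ 0 := by rw [hη_def]; simp [hlam0]
    have hη : η 0 ≠ 0 := by
      rw [hη0]; exact mul_ne_zero (Real.exp_ne_zero r) hξ
    set v : Fin d → ℝ := ε • ξ' - η with hv_def
    have hv0 : v 0 = 0 := by
      rw [hv_def]
      simp only [Pi.sub_apply, Pi.smul_apply, smul_eq_mul, hη0, hξ'0]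
      have h2 : ε * (ε * Real.exp r * ξ 0) = Real.exp r * ξ 0 := by
        calc ε * (ε * Real.exp r * ξ 0) = (ε * ε) * (Real.exp r * ξ 0) := by ring
          _ = Real.exp r * ξ 0 := by rw [hεsq, one_mul]
      rw [h2, sub_self]
    obtain ⟨Z, hZ, hZv⟩ := shear_surj hupper hmulclosed hXmem hXrow hXspan hXindep hη v hv0
    refine ⟨ε • (NormedSpace.exp (r • Matrix.diagonal lam) * (1 + Z)),
      ⟨⟨ε, r, Z, hZ, hεpm, rfl⟩, ?_⟩, ?_⟩
    · rw [shear_mulVec_formula hupper lam hZ ε r ξ, ← hη_def, hZv, hv_def]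
      funext i
      simp only [Pi.smul_apply, Pi.add_apply, Pi.sub_apply, smul_eq_mul]
      calc ε * (η i + (ε * ξ' i - η i)) = (ε * ε) * ξ' i := by ring
        _ = ξ' i := by rw [hεsq, one_mul]
    · rintro h' ⟨⟨ε', r', Z', hZ', hε'pm, rfl⟩, hact⟩
      have hc' : ε' * (Real.exp r' * ξ 0) = ξ' 0 := by
        rw [← hcoord ε' r' Z' hZ' ξ, hact]
      have hkey : ε' * Real.exp r' = ε * Real.exp r := by
        have h3 : (ε' * Real.exp r') * ξ 0 = (ε * Real.exp r) * ξ 0 := by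
          rw [mul_assoc, hc', hξ'0]
        exact mul_right_cancel₀ hξ h3
      have hε'ε : ε' = ε := by
        rcases hε'pm with h1 | h1 <;> rcases hεpm with h2 | h2 <;> rw [h1, h2] <;>
          first
          | rfl
          | (exfalso
             rw [h1, h2] at hkey
             nlinarith [Real.exp_pos r, Real.exp_pos r'])
      have hr'r : r' = r := by
        rw [hε'ε] at hkey
        have := mul_left_cancel₀ hεne hkey
        exact Real.exp_injective this
      subst hε'ε
      subst hr'r
      -- now show Z' = Z
      have hact' : Z'ᵀ.mulVec η = v := by
        rw [shear_mulVec_formula hupper lam hZ' ε r ξ, ← hη_def] at hact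
        funext i
        have := congrFun hact i
        simp only [Pi.smul_apply, Pi.add_apply, smul_eq_mul] at this
        rw [hv_def]
        simp only [Pi.sub_apply, Pi.smul_apply, smul_eq_mul]
        have h2 : ε * (ε * (η i + (Z'ᵀ.mulVec η) i)) = ε * ξ' i := by rw [this]
        calc (Z'ᵀ.mulVec η) i
            = (ε * ε) * (η i + (Z'ᵀ.mulVec η) i) - η i := by rw [hεsq]; ring
          _ = ε * ξ' i - η i := by rw [mul_assoc, h2]
      have hZZ' : Z' = Z := by
        have hsub : (Z' - Z)ᵀ.mulVec η = 0 := by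
          rw [Matrix.transpose_sub, Matrix.sub_mulVec, hact', hZv, sub_self]
        have := shear_inj hupper hmulclosed hXmem hXrow hXspan
          (Submodule.sub_mem _ hZ' hZ) hη hsub
        exact sub_eq_zero.mp this
      rw [hZZ']
  refine ⟨H1, H2, ?_⟩
  ext ξ
  simp only [Set.mem_setOf_eq]
  constructor
  · intro hξ
    have h1 : (Pi.single 0 1 : Fin d → ℝ) 0 ≠ 0 := by simp
    obtain ⟨h, ⟨hmem, heq⟩, -⟩ := H1 (Pi.single 0 1) ξ h1 hξ
    exact ⟨h, hmem, heq.symm⟩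
  · rintro ⟨h, hmem, rfl⟩
    exact H2 h hmem (Pi.single 0 1) (by simp)
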